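/- arXiv:2512.10139 — 3 statements merged into one kernel-verified Lean document; each statement's English description precedes it below -/
import Mathlib

section
/- The backward Mehler kernel satisfies the exact matrix Harnack identity: for t < 0, ∇_i ∇_j M - (∇_i M ∇_j M)/M + (e^{2t}/(1 - e^{2t})) M δ_{ij} = 0 for all indices i, j. -/
/-!
For fixed `t`, `M(·, t)` is a radial Gaussian `c · exp (a ‖x‖²)` with `2a = -e^{2t}/(1 - e^{2t})`.
For any such `f` one has `∇ᵢ∇ⱼ f - ∇ᵢ f ∇ⱼ f / f = f · ∇ᵢ∇ⱼ log f = 2a δᵢⱼ f`, which is the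
identity. Where `f x = 0` both sides vanish, since `∇f` and `∇²f` are multiples of `f`.
-/

open Real
open scoped RealInnerProductSpace

noncomputable def backwardMehler (n : ℕ) (x : EuclideanSpace ℝ (Fin n)) (t : ℝ) : ℝ :=
  (1 - Real.exp (2 * t)) ^ (-(n : ℝ) / 2) *
    Real.exp (-(1 / 2) * (Real.exp (2 * t) * ‖x‖ ^ 2) / (1 - Real.exp (2 * t)))

/-- i-th partial derivative -/
noncomputable def pd {n : ℕ} (i : Fin n) (f : EuclideanSpace ℝ (Fin n) → ℝ)
    (x : EuclideanSpace ℝ (Fin n)) : ℝ :=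
  fderiv ℝ f x (EuclideanSpace.single i 1)

section RadialGaussian

variable {E : Type*} [NormedAddCommGroup E] [InnerProductSpace ℝ E]

noncomputable def radialGaussian (c a : ℝ) (x : E) : ℝ := c * exp (a * ‖x‖ ^ 2)

variable (c a : ℝ)

theorem hasFDerivAt_radialGaussian (x : E) :
    HasFDerivAt (radialGaussian c a) ((2 * a * radialGaussian c a x) • innerSL ℝ x) x := by
  have h := (((hasFDerivAt_id x).norm_sq).const_mul a).exp.const_mul c
  refine h.congr_fderiv ?_
  ext v
  simp only [radialGaussian, smul_apply, ContinuousLinearMap.comp_id, id, two_smul,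
    add_apply, smul_eq_mul]
  ring

theorem fderiv_radialGaussian_apply (x v : E) :
    fderiv ℝ (radialGaussian c a) x v = 2 * a * ⟪v, x⟫ * radialGaussian c a x := by
  rw [(hasFDerivAt_radialGaussian c a x).fderiv]
  simp only [smul_apply, innerSL_apply_apply, smul_eq_mul, real_inner_comm x v]
  ring

theorem fderiv_fderiv_radialGaussian_apply (x v w : E) :
    fderiv ℝ (fun y => fderiv ℝ (radialGaussian c a) y v) x w =
      (2 * a * ⟪v, w⟫ + 2 * a * ⟪v, x⟫ * (2 * a * ⟪w, x⟫)) * radialGaussian c a x := by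
  have hinner : HasFDerivAt (fun y : E => 2 * a * ⟪v, y⟫) ((2 * a) • innerSL ℝ v) x :=
    ((innerSL ℝ v).hasFDerivAt).const_mul (2 * a)
  simp_rw [fderiv_radialGaussian_apply]
  have hprod : HasFDerivAt (fun y => 2 * a * ⟪v, y⟫ * radialGaussian c a y) _ x :=
    hinner.mul (hasFDerivAt_radialGaussian c a x)
  rw [hprod.fderiv]
  simp only [add_apply, smul_apply, innerSL_apply_apply, smul_eq_mul, real_inner_comm x w]
  ring

theorem fderiv_fderiv_radialGaussian_sub_mul_div (x v w : E) :
    fderiv ℝ (fun y => fderiv ℝ (radialGaussian c a) y v) x w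
        - fderiv ℝ (radialGaussian c a) x w * fderiv ℝ (radialGaussian c a) x v
          / radialGaussian c a x
      = 2 * a * ⟪v, w⟫ * radialGaussian c a x := by
  rw [fderiv_fderiv_radialGaussian_apply, fderiv_radialGaussian_apply,
    fderiv_radialGaussian_apply]
  rcases eq_or_ne (radialGaussian c a x) 0 with h | h
  · simp [h]
  · field_simp
    ring

end RadialGaussian

theorem backwardMehler_eq_radialGaussian (n : ℕ) (t : ℝ) :
    (fun y => backwardMehler n y t) =
      radialGaussian ((1 - exp (2 * t)) ^ (-(n : ℝ) / 2))
        (-(1 / 2) * exp (2 * t) / (1 - exp (2 * t))) := by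
  funext y
  simp only [backwardMehler, radialGaussian]
  ring_nf

theorem backward_mehler_matrix_harnack_general (n : ℕ) (t : ℝ)
    (x : EuclideanSpace ℝ (Fin n)) (i j : Fin n) :
    pd i (pd j (fun y => backwardMehler n y t)) x
      - pd i (fun y => backwardMehler n y t) x * pd j (fun y => backwardMehler n y t) x
          / backwardMehler n x t
      + Real.exp (2 * t) / (1 - Real.exp (2 * t)) * backwardMehler n x t *
          (if i = j then 1 else 0) = 0 := by
  have hM := backwardMehler_eq_radialGaussian n t
  rw [hM]
  unfold pd
  rw [congrFun hM x, fderiv_fderiv_radialGaussian_sub_mul_div, EuclideanSpace.inner_single_left,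
    PiLp.single_apply]
  rcases eq_or_ne i j with rfl | hij
  · simp only [if_true, map_one, one_mul]
    ring
  · simp only [hij, hij.symm, if_false, mul_zero]
    ring

theorem backward_mehler_matrix_harnack (n : ℕ) (t : ℝ) (ht : t < 0)
    (x : EuclideanSpace ℝ (Fin n)) (i j : Fin n) :
    pd i (pd j (fun y => backwardMehler n y t)) x
      - pd i (fun y => backwardMehler n y t) x * pd j (fun y => backwardMehler n y t) x
          / backwardMehler n x t
      + Real.exp (2 * t) / (1 - Real.exp (2 * t)) * backwardMehler n x t *
          (if i = j then 1 else 0) = 0 :=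
  backward_mehler_matrix_harnack_general n t x i j
end

section
/- Consequence of the constant pairing: in the setting of the previous statement, if additionally u(x, 0) = 0 for all x ∈ Ω, then u(x, -S) = 0 for all x ∈ Ω; hence if u vanishes at time 0 it vanishes at all earlier times in (-T, 0]. -/
open MeasureTheory Real

noncomputable def gaussDensity (n : ℕ) (x : EuclideanSpace ℝ (Fin n)) : ℝ :=
  (2 * Real.pi) ^ (-(n : ℝ) / 2) * Real.exp (-‖x‖ ^ 2 / 2)

noncomputable def lap {n : ℕ} (f : EuclideanSpace ℝ (Fin n) → ℝ)
    (x : EuclideanSpace ℝ (Fin n)) : ℝ :=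
  ∑ i : Fin n, fderiv ℝ (fun y => fderiv ℝ f y (EuclideanSpace.single i 1)) x
    (EuclideanSpace.single i 1)

open Set in
theorem interval_of_component (c : Set ℝ) (ho : IsOpen c) (hb : Bornology.IsBounded c)
    (hne : c.Nonempty) (hc : IsPreconnected c) : c = Ioo (sInf c) (sSup c) := by
  have hoc : c.OrdConnected := hc.ordConnected
  have hbdd_a : BddBelow c := hb.bddBelow
  have hbdd_b : BddAbove c := hb.bddAbove
  apply Subset.antisymm
  · intro x hx
    constructor
    · rcases lt_or_eq_of_le (csInf_le hbdd_a hx) with h | h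
      · exact h
      · exfalso
        rcases Metric.isOpen_iff.1 ho x hx with ⟨ε, hε, hball⟩
        have hmem : x - ε/2 ∈ c := hball (by
          rw [Metric.mem_ball, Real.dist_eq, show x - ε/2 - x = -(ε/2) by ring, abs_neg,
            abs_of_pos (by linarith)]; linarith)
        have := csInf_le hbdd_a hmem
        rw [← h] at this; linarith [h ▸ this]
    · rcases lt_or_eq_of_le (le_csSup hbdd_b hx) with h | h
      · exact h
      · exfalso
        rcases Metric.isOpen_iff.1 ho x hx with ⟨ε, hε, hball⟩
        have hmem : x + ε/2 ∈ c := hball (by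
          rw [Metric.mem_ball, Real.dist_eq, show x + ε/2 - x = ε/2 by ring,
            abs_of_pos (by linarith)]; linarith)
        have := le_csSup hbdd_b hmem
        rw [← h] at this; linarith
  · intro t ht
    obtain ⟨p, hp, hpt⟩ := exists_lt_of_csInf_lt hne ht.1
    obtain ⟨q, hq, htq⟩ := exists_lt_of_lt_csSup hne ht.2
    exact hoc.out hp hq ⟨hpt.le, htq.le⟩

-- endpoints of a component are in the frontier
theorem endpoints_mem_frontier (s : Set ℝ) (hso : IsOpen s) (hsb : Bornology.IsBounded s)
    (x : ℝ) (hx : x ∈ s) :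
    sInf (connectedComponentIn s x) ∈ frontier s ∧
      sSup (connectedComponentIn s x) ∈ frontier s := by
  set c := connectedComponentIn s x with hc
  have hco : IsOpen c := hso.connectedComponentIn
  have hcb : Bornology.IsBounded c := hsb.subset (connectedComponentIn_subset s x)
  have hcne : c.Nonempty := ⟨x, mem_connectedComponentIn hx⟩
  have hcp : IsPreconnected c := isPreconnected_connectedComponentIn
  have hIoo : c = Set.Ioo (sInf c) (sSup c) :=
    interval_of_component c hco hcb hcne hcp
  have hab : sInf c < sSup c := by
    rcases hcne with ⟨y, hy⟩
    rw [hIoo] at hy; exact lt_trans hy.1 hy.2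
  have hsub : c ⊆ s := connectedComponentIn_subset s x
  have hclos : closure c ⊆ closure s := closure_mono hsub
  -- key: if an endpoint were in s, the component could be enlarged
  have key : ∀ a : ℝ, a ∉ c → a ∈ closure c → a ∉ s := by
    intro a ha hacl has
    rcases Metric.isOpen_iff.1 hso a has with ⟨ε, hε, hball⟩
    -- the set c ∪ ball a ε is preconnected? need overlap. a ∈ closure c so ball meets c.
    have hmeets : (Metric.ball a ε ∩ c).Nonempty := by
      have := Metric.mem_closure_iff.1 hacl ε hε
      rcases this with ⟨b, hb, hdist⟩
      exact ⟨b, Metric.mem_ball'.2 hdist, hb⟩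
    have hballp : IsPreconnected (Metric.ball a ε) :=
      (convex_ball a ε).isPreconnected
    have hunion : IsPreconnected (c ∪ Metric.ball a ε) := by
      apply IsPreconnected.union' _ hcp hballp
      rcases hmeets with ⟨b, hb1, hb2⟩
      exact ⟨b, hb2, hb1⟩
    have hsubs : c ∪ Metric.ball a ε ⊆ s := Set.union_subset hsub hball
    have : c ∪ Metric.ball a ε ⊆ c := by
      rcases hmeets with ⟨b, hb1, hb2⟩
      have h2 := hunion.subset_connectedComponentIn (Set.mem_union_left _ hb2) hsubs
      rw [← connectedComponentIn_eq (show b ∈ connectedComponentIn s x from hb2)] at h2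
      exact h2
    exact ha (this (Set.mem_union_right _ (Metric.mem_ball_self hε)))
  have hinf_cl : sInf c ∈ closure c := csInf_mem_closure hcne hcb.bddBelow
  have hsup_cl : sSup c ∈ closure c := csSup_mem_closure hcne hcb.bddAbove
  have hinf_notin : sInf c ∉ c := by
    intro h; exact lt_irrefl _ ((Set.ext_iff.1 hIoo _).1 h).1
  have hsup_notin : sSup c ∉ c := by
    intro h; exact lt_irrefl _ ((Set.ext_iff.1 hIoo _).1 h).2
  rw [hso.frontier_eq]
  constructor
  · exact ⟨hclos hinf_cl, key _ hinf_notin hinf_cl⟩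
  · exact ⟨hclos hsup_cl, key _ hsup_notin hsup_cl⟩

theorem integral_deriv_eq_zero_1d (f : ℝ → ℝ) (hf : Differentiable ℝ f)
    (hf' : Continuous (deriv f)) (s : Set ℝ) (hso : IsOpen s)
    (hsb : Bornology.IsBounded s) (h0 : ∀ x ∈ frontier s, f x = 0) :
    ∫ x in s, deriv f x = 0 := by
  -- integrability
  have hint : IntegrableOn (deriv f) s := by
    obtain ⟨R, hR⟩ := hsb.subset_closedBall 0
    have hsub : s ⊆ Set.Icc (-R) R := by
      rwa [Real.closedBall_eq_Icc, zero_sub, zero_add] at hR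
    exact (hf'.integrableOn_Icc (a := -R) (b := R)).mono_set hsub
  -- the set of connected components
  have hdisj : ({c | ∃ x ∈ s, c = connectedComponentIn s x} : Set (Set ℝ)).PairwiseDisjoint id := by
    rintro c ⟨x, hx, rfl⟩ d ⟨y, hy, rfl⟩ hne
    rw [Function.onFun, Set.disjoint_left]
    intro z hzc hzd
    exact hne ((connectedComponentIn_eq hzc).trans (connectedComponentIn_eq hzd).symm)
  have hCopen : ∀ c ∈ ({c | ∃ x ∈ s, c = connectedComponentIn s x} : Set (Set ℝ)), IsOpen c := by
    rintro c ⟨x, hx, rfl⟩; exact hso.connectedComponentIn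
  have hCne : ∀ c ∈ ({c | ∃ x ∈ s, c = connectedComponentIn s x} : Set (Set ℝ)), Set.Nonempty c := by
    rintro c ⟨x, hx, rfl⟩; exact ⟨x, mem_connectedComponentIn hx⟩
  have hcount : ({c | ∃ x ∈ s, c = connectedComponentIn s x} : Set (Set ℝ)).Countable :=
    hdisj.countable_of_isOpen hCopen hCne
  have hctbl : Countable ↥({c | ∃ x ∈ s, c = connectedComponentIn s x} : Set (Set ℝ)) :=
    hcount.to_subtype
  have hunion : ⋃ (c : ↥({c | ∃ x ∈ s, c = connectedComponentIn s x} : Set (Set ℝ))), (c : Set ℝ) = s := by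
    apply Set.Subset.antisymm
    · exact Set.iUnion_subset fun c => by
        obtain ⟨x, hx, hceq⟩ := c.2
        rw [hceq]; exact connectedComponentIn_subset s x
    · intro x hx
      exact Set.mem_iUnion.2 ⟨⟨connectedComponentIn s x, ⟨x, hx, rfl⟩⟩,
        mem_connectedComponentIn hx⟩
  rw [← hunion]
  rw [MeasureTheory.integral_iUnion (ι := ↥({c | ∃ x ∈ s, c = connectedComponentIn s x} : Set (Set ℝ))) (s := fun c => (c : Set ℝ)) (fun c => (hCopen c.1 c.2).measurableSet)
    (fun c d hcd => hdisj c.2 d.2 (fun h => hcd (Subtype.ext h)))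
    (by rw [hunion]; exact hint)]
  have hzero : ∀ c : ↥({c | ∃ x ∈ s, c = connectedComponentIn s x} : Set (Set ℝ)),
      ∫ y in (c : Set ℝ), deriv f y = 0 := by
    rintro ⟨c, hcC⟩
    obtain ⟨x, hx, hceq⟩ := hcC
    subst hceq
    have hcb : Bornology.IsBounded (connectedComponentIn s x) :=
      hsb.subset (connectedComponentIn_subset s x)
    have hIoo : connectedComponentIn s x
        = Set.Ioo (sInf (connectedComponentIn s x)) (sSup (connectedComponentIn s x)) :=
      interval_of_component _ hso.connectedComponentIn hcb
        ⟨x, mem_connectedComponentIn hx⟩ isPreconnected_connectedComponentIn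
    obtain ⟨hfa, hfb⟩ := endpoints_mem_frontier s hso hsb x hx
    have hab : sInf (connectedComponentIn s x) ≤ sSup (connectedComponentIn s x) := by
      have hmem := mem_connectedComponentIn hx
      rw [hIoo] at hmem
      exact le_of_lt (lt_trans hmem.1 hmem.2)
    show ∫ y in connectedComponentIn s x, deriv f y = 0
    rw [hIoo, ← MeasureTheory.integral_Ioc_eq_integral_Ioo,
      ← intervalIntegral.integral_of_le hab,
      intervalIntegral.integral_deriv_eq_sub (fun y _ => hf y)
        (hf'.intervalIntegrable _ _),
      h0 _ hfb, h0 _ hfa, sub_zero]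
  rw [tsum_congr hzero, tsum_zero]

theorem integral_pderiv_eq_zero {n : ℕ} (i : Fin n) (F : EuclideanSpace ℝ (Fin n) → ℝ)
    (hF : Differentiable ℝ F)
    (hF' : Continuous (fun x => fderiv ℝ F x (EuclideanSpace.single i 1)))
    (Ω : Set (EuclideanSpace ℝ (Fin n))) (hΩo : IsOpen Ω) (hΩb : Bornology.IsBounded Ω)
    (h0 : ∀ x ∈ frontier Ω, F x = 0) :
    ∫ x in Ω, fderiv ℝ F x (EuclideanSpace.single i 1) = 0 := by
  classical
  set H : EuclideanSpace ℝ (Fin n) → ℝ := fun x => fderiv ℝ F x (EuclideanSpace.single i 1)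
    with hH
  -- integrability of the indicator
  have hclos : IsCompact (closure Ω) :=
    Metric.isCompact_of_isClosed_isBounded isClosed_closure hΩb.closure
  have hIntOn : IntegrableOn H Ω := by
    exact (hF'.continuousOn.integrableOn_compact hclos).mono_set subset_closure
  have hInt : Integrable (Ω.indicator H) volume :=
    (integrable_indicator_iff hΩo.measurableSet).2 hIntOn
  -- the measurable equivalence
  set E : (ℝ × ({j : Fin n // ¬ j = i} → ℝ)) ≃ᵐ EuclideanSpace ℝ (Fin n) :=
    ((MeasurableEquiv.funUnique {j : Fin n // j = i} ℝ).symm.prodCongr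
      (MeasurableEquiv.refl _)).trans
      (((MeasurableEquiv.piEquivPiSubtypeProd (fun _ : Fin n => ℝ) (fun j => j = i)).symm).trans
        (MeasurableEquiv.toLp 2 (Fin n → ℝ))) with hE
  have hEmp : MeasurePreserving (⇑E) volume volume := by
    have h1 : MeasurePreserving
        (Prod.map (⇑(MeasurableEquiv.funUnique {j : Fin n // j = i} ℝ).symm)
          (id : ({j : Fin n // ¬ j = i} → ℝ) → _)) volume volume :=
      ((volume_preserving_funUnique {j : Fin n // j = i} ℝ).symm).prod
        (MeasurePreserving.id volume)
    have h2 := (volume_preserving_piEquivPiSubtypeProd (fun _ : Fin n => ℝ)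
      (fun j => j = i)).symm
    have h3 := (EuclideanSpace.volume_preserving_symm_measurableEquiv_toLp (Fin n)).symm
    have hcomp : ⇑E = (⇑(MeasurableEquiv.toLp 2 (Fin n → ℝ)))
        ∘ (⇑(MeasurableEquiv.piEquivPiSubtypeProd (fun _ : Fin n => ℝ) (fun j => j = i)).symm)
        ∘ (Prod.map (⇑(MeasurableEquiv.funUnique {j : Fin n // j = i} ℝ).symm)
          (id : ({j : Fin n // ¬ j = i} → ℝ) → _)) := by
      funext p; rfl
    rw [hcomp]
    refine (h3.comp h2).comp ?_
    have hfe : (Fintype.subtypeEq i) = (Subtype.fintype (fun j : Fin n => j = i)) :=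
      Subsingleton.elim _ _
    rw [← hfe]
    exact h1
  -- coordinates of E
  have hEcoord : ∀ (t : ℝ) (y : {j : Fin n // ¬ j = i} → ℝ) (j : Fin n),
      (E (t, y) : EuclideanSpace ℝ (Fin n)) j = if h : j = i then t else y ⟨j, h⟩ := by
    intro t y j
    simp [hE, MeasurableEquiv.piEquivPiSubtypeProd,
      MeasurableEquiv.funUnique, Equiv.funUnique, MeasurableEquiv.coe_toLp,
      MeasurableEquiv.prodCongr, Equiv.piEquivPiSubtypeProd]
  -- structural form of slices
  have hEline : ∀ (t : ℝ) (y : {j : Fin n // ¬ j = i} → ℝ),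
      E (t, y) = E (0, y) + t • EuclideanSpace.single i 1 := by
    intro t y
    ext j
    have h1 := hEcoord t y j
    have h2 := hEcoord 0 y j
    show (E (t, y) : EuclideanSpace ℝ (Fin n)) j
      = (E (0, y) : EuclideanSpace ℝ (Fin n)) j + t * (EuclideanSpace.single i 1 : EuclideanSpace ℝ (Fin n)) j
    rw [h1, h2, EuclideanSpace.single_apply]
    by_cases h : j = i <;> simp [h]
  -- coordinate bound
  have habs : ∀ (x : EuclideanSpace ℝ (Fin n)), |x i| ≤ ‖x‖ := by
    intro x
    have h1 : (inner ℝ (EuclideanSpace.single i (1:ℝ)) x : ℝ) = x i := by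
      rw [EuclideanSpace.inner_single_left]; simp
    have h2 := abs_real_inner_le_norm (EuclideanSpace.single i (1:ℝ)) x
    rw [h1, EuclideanSpace.norm_single] at h2
    simpa using h2
  obtain ⟨R, hR⟩ := hΩb.subset_closedBall 0
  -- the inner (sliced) integral vanishes
  have key : ∀ y : {j : Fin n // ¬ j = i} → ℝ,
      (∫ t : ℝ, Ω.indicator H (E (t, y))) = 0 := by
    intro y
    set g : ℝ → EuclideanSpace ℝ (Fin n) := fun t => E (t, y) with hg
    have hgline : g = fun t => E (0, y) + t • EuclideanSpace.single i 1 :=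
      funext fun t => hEline t y
    have hgc : Continuous g := by
      rw [hgline]
      exact continuous_const.add (continuous_id.smul continuous_const)
    set sy : Set ℝ := g ⁻¹' Ω with hsy
    have hsyo : IsOpen sy := hΩo.preimage hgc
    have hsyb : Bornology.IsBounded sy := by
      apply (Metric.isBounded_Icc (-R) R).subset
      intro t ht
      have h1 : g t ∈ Metric.closedBall 0 R := hR ht
      rw [Metric.mem_closedBall, dist_zero_right] at h1
      have h2 : (g t : EuclideanSpace ℝ (Fin n)) i = t := by
        show (E (t, y) : EuclideanSpace ℝ (Fin n)) i = t
        rw [hEcoord t y i, dif_pos rfl]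
      have h3 := habs (g t)
      rw [h2] at h3
      have h4 := abs_le.1 (h3.trans h1)
      exact ⟨h4.1, h4.2⟩
    have hf : ∀ t, HasDerivAt (fun t => F (g t)) (H (g t)) t := by
      intro t
      have hgd : HasDerivAt g (EuclideanSpace.single i 1) t := by
        rw [hgline]
        simpa using ((hasDerivAt_id t).smul_const
          (EuclideanSpace.single i (1:ℝ))).const_add (E (0, y))
      exact (hF (g t)).hasFDerivAt.comp_hasDerivAt t hgd
    have hder : deriv (fun t => F (g t)) = fun t => H (g t) :=
      funext fun t => (hf t).deriv
    have hzero1d : ∫ t in sy, deriv (fun t => F (g t)) t = 0 := by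
      apply integral_deriv_eq_zero_1d _ (fun t => (hf t).differentiableAt)
        (by rw [hder]; exact hF'.comp hgc) sy hsyo hsyb
      intro t ht
      rw [hsyo.frontier_eq] at ht
      have htc : g t ∈ closure Ω :=
        hgc.closure_preimage_subset Ω ht.1
      have htn : g t ∉ Ω := ht.2
      have : g t ∈ frontier Ω := by
        rw [hΩo.frontier_eq]; exact ⟨htc, htn⟩
      exact h0 _ this
    calc (∫ t : ℝ, Ω.indicator H (E (t, y)))
        = ∫ t : ℝ, sy.indicator (fun t => H (g t)) t := by
          apply integral_congr_ae
          filter_upwards with t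
          by_cases h : t ∈ sy
          · rw [Set.indicator_of_mem h, Set.indicator_of_mem (show g t ∈ Ω from h)]
          · rw [Set.indicator_of_notMem h,
              Set.indicator_of_notMem (show g t ∉ Ω from h)]
      _ = ∫ t in sy, H (g t) := integral_indicator hsyo.measurableSet
      _ = ∫ t in sy, deriv (fun t => F (g t)) t := by rw [hder]
      _ = 0 := hzero1d
  -- assemble via Fubini
  rw [← integral_indicator hΩo.measurableSet,
    ← hEmp.integral_comp E.measurableEmbedding (Ω.indicator H)]
  have hIntComp : Integrable ((Ω.indicator H) ∘ ⇑E) volume :=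
    (hEmp.integrable_comp_emb E.measurableEmbedding).2 hInt
  have hvol : (volume : Measure (ℝ × ({j : Fin n // ¬ j = i} → ℝ)))
      = (volume : Measure ℝ).prod volume := rfl
  calc ∫ p : ℝ × ({j : Fin n // ¬ j = i} → ℝ), Ω.indicator H (E p)
      = ∫ p : ℝ × ({j : Fin n // ¬ j = i} → ℝ), ((Ω.indicator H) ∘ ⇑E) p
        ∂((volume : Measure ℝ).prod volume) := by rw [← hvol]; rfl
    _ = ∫ y, ∫ t : ℝ, ((Ω.indicator H) ∘ ⇑E) (t, y) := by
        rw [integral_prod_symm _ (by rw [← hvol]; exact hIntComp)]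
    _ = ∫ (_ : {j : Fin n // ¬ j = i} → ℝ), (0:ℝ) := by
        apply integral_congr_ae
        filter_upwards with y
        exact key y
    _ = 0 := integral_zero _ _

theorem gauss_pos (n : ℕ) (x : EuclideanSpace ℝ (Fin n)) : 0 < gaussDensity n x := by
  unfold gaussDensity
  have h1 : (0:ℝ) < 2 * Real.pi := by positivity
  exact mul_pos (Real.rpow_pos_of_pos h1 _) (Real.exp_pos _)

theorem gauss_contDiff (n : ℕ) : ContDiff ℝ (⊤ : ℕ∞) (gaussDensity n) := by
  unfold gaussDensity
  apply ContDiff.mul contDiff_const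
  exact Real.contDiff_exp.comp (((ContDiff.norm_sq ℝ contDiff_id).neg).div_const 2)

theorem gauss_hasFDerivAt (n : ℕ) (x : EuclideanSpace ℝ (Fin n)) :
    HasFDerivAt (gaussDensity n) (-(gaussDensity n x) • (innerSL ℝ x)) x := by
  have hsq : HasFDerivAt (fun y : EuclideanSpace ℝ (Fin n) => ‖y‖ ^ 2)
      (2 • (innerSL ℝ x)) x := by
    simpa using (hasFDerivAt_id x).norm_sq
  have hhalf : HasFDerivAt (fun y : EuclideanSpace ℝ (Fin n) => -‖y‖ ^ 2 / 2)
      ((-(1:ℝ)/2) • (2 • (innerSL ℝ x))) x := by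
    have h := (hsq.const_mul (-(1:ℝ)/2))
    have heq : (fun y : EuclideanSpace ℝ (Fin n) => -(1:ℝ)/2 * ‖y‖ ^ 2)
        = fun y : EuclideanSpace ℝ (Fin n) => -‖y‖ ^ 2 / 2 := by
      funext y; ring
    rwa [heq] at h
  have hexp : HasFDerivAt (fun y : EuclideanSpace ℝ (Fin n) => Real.exp (-‖y‖ ^ 2 / 2))
      (Real.exp (-‖x‖ ^ 2 / 2) • ((-(1:ℝ)/2) • (2 • (innerSL ℝ x)))) x := hhalf.exp
  have hmul := hexp.const_mul ((2 * Real.pi) ^ (-(n : ℝ) / 2))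
  have heq2 : (fun y : EuclideanSpace ℝ (Fin n) =>
      (2 * Real.pi) ^ (-(n : ℝ) / 2) * Real.exp (-‖y‖ ^ 2 / 2)) = gaussDensity n := rfl
  rw [heq2] at hmul
  refine hmul.congr_fderiv ?_
  ext v
  simp [gaussDensity]
  ring

theorem gauss_fderiv_apply (n : ℕ) (x v : EuclideanSpace ℝ (Fin n)) :
    fderiv ℝ (gaussDensity n) x v = -(inner ℝ x v : ℝ) * gaussDensity n x := by
  rw [(gauss_hasFDerivAt n x).fderiv]
  simp
  ring

theorem euclid_sum_single {n : ℕ} (x : EuclideanSpace ℝ (Fin n)) :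
    x = ∑ i : Fin n, x i • EuclideanSpace.single i (1:ℝ) := by
  ext j
  rw [show (∑ i : Fin n, x i • EuclideanSpace.single i (1:ℝ)) j
    = ∑ i : Fin n, (x i • EuclideanSpace.single i (1:ℝ)) j from by rw [WithLp.ofLp_sum, Finset.sum_apply]]
  simp [EuclideanSpace.single_apply]

theorem inner_self_gradient {n : ℕ} (f : EuclideanSpace ℝ (Fin n) → ℝ)
    (x : EuclideanSpace ℝ (Fin n)) :
    (inner ℝ x (gradient f x) : ℝ) = ∑ i, x i * fderiv ℝ f x (EuclideanSpace.single i 1) := by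
  rw [real_inner_comm]
  unfold gradient
  rw [InnerProductSpace.toDual_symm_apply]
  calc fderiv ℝ f x x = fderiv ℝ f x (∑ i : Fin n, x i • EuclideanSpace.single i (1:ℝ)) := by
        rw [← euclid_sum_single]
    _ = ∑ i, x i * fderiv ℝ f x (EuclideanSpace.single i 1) := by
        rw [map_sum]
        exact Finset.sum_congr rfl fun i _ => by rw [ContinuousLinearMap.map_smul]; simp

theorem pairing_symm {n : ℕ} (Ω : Set (EuclideanSpace ℝ (Fin n))) (hΩo : IsOpen Ω)
    (hΩb : Bornology.IsBounded Ω) (f g : EuclideanSpace ℝ (Fin n) → ℝ)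
    (hf : ContDiff ℝ (⊤ : ℕ∞) f) (hg : ContDiff ℝ (⊤ : ℕ∞) g)
    (hf0 : ∀ x ∈ frontier Ω, f x = 0) (hg0 : ∀ x ∈ frontier Ω, g x = 0) :
    ∫ x in Ω, gaussDensity n x *
      (g x * (lap f x - (inner ℝ x (gradient f x) : ℝ))
        - f x * (lap g x - (inner ℝ x (gradient g x) : ℝ))) = 0 := by
  classical
  have hγ : ContDiff ℝ (⊤ : ℕ∞) (gaussDensity n) := gauss_contDiff n
  -- directional derivatives are smooth
  have hDf : ∀ i : Fin n, ContDiff ℝ (⊤ : ℕ∞)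
      (fun y => fderiv ℝ f y (EuclideanSpace.single i 1)) :=
    fun i => (hf.fderiv_right (by simp)).clm_apply contDiff_const
  have hDg : ∀ i : Fin n, ContDiff ℝ (⊤ : ℕ∞)
      (fun y => fderiv ℝ g y (EuclideanSpace.single i 1)) :=
    fun i => (hg.fderiv_right (by simp)).clm_apply contDiff_const
  -- the vector field components
  set W : Fin n → EuclideanSpace ℝ (Fin n) → ℝ := fun i y =>
    gaussDensity n y * (g y * fderiv ℝ f y (EuclideanSpace.single i 1)
      - f y * fderiv ℝ g y (EuclideanSpace.single i 1)) with hW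
  have hWc : ∀ i, ContDiff ℝ (⊤ : ℕ∞) (W i) :=
    fun i => hγ.mul ((hg.mul (hDf i)).sub (hf.mul (hDg i)))
  have hWint : ∀ i, ∫ x in Ω, fderiv ℝ (W i) x (EuclideanSpace.single i 1) = 0 := by
    intro i
    apply integral_pderiv_eq_zero i (W i) ((hWc i).differentiable (by simp))
      (((hWc i).fderiv_right (m := (⊤ : ℕ∞)) (by simp)).clm_apply contDiff_const).continuous Ω hΩo hΩb
    intro x hx
    rw [hW]
    simp only
    rw [hf0 x hx, hg0 x hx]
    ring
  -- pointwise divergence identity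
  have hterm : ∀ (x : EuclideanSpace ℝ (Fin n)) (i : Fin n),
      fderiv ℝ (W i) x (EuclideanSpace.single i 1)
      = gaussDensity n x * (g x * fderiv ℝ
          (fun y => fderiv ℝ f y (EuclideanSpace.single i 1)) x (EuclideanSpace.single i 1))
        - gaussDensity n x * (f x * fderiv ℝ
          (fun y => fderiv ℝ g y (EuclideanSpace.single i 1)) x (EuclideanSpace.single i 1))
        - gaussDensity n x * (g x * (x i * fderiv ℝ f x (EuclideanSpace.single i 1)))
        + gaussDensity n x * (f x * (x i * fderiv ℝ g x (EuclideanSpace.single i 1))) := by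
    intro x i
    have hγd : DifferentiableAt ℝ (gaussDensity n) x := hγ.differentiable (by simp) x
    have hfd : DifferentiableAt ℝ f x := hf.differentiable (by simp) x
    have hgd : DifferentiableAt ℝ g x := hg.differentiable (by simp) x
    have hDfd : DifferentiableAt ℝ (fun y => fderiv ℝ f y (EuclideanSpace.single i 1)) x :=
      (hDf i).differentiable (by simp) x
    have hDgd : DifferentiableAt ℝ (fun y => fderiv ℝ g y (EuclideanSpace.single i 1)) x :=
      (hDg i).differentiable (by simp) x
    have hin : DifferentiableAt ℝ (fun y => g y * fderiv ℝ f y (EuclideanSpace.single i 1)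
        - f y * fderiv ℝ g y (EuclideanSpace.single i 1)) x :=
      (hgd.mul hDfd).sub (hfd.mul hDgd)
    have h1 : fderiv ℝ (W i) x = gaussDensity n x •
        fderiv ℝ (fun y => g y * fderiv ℝ f y (EuclideanSpace.single i 1)
          - f y * fderiv ℝ g y (EuclideanSpace.single i 1)) x
        + (g x * fderiv ℝ f x (EuclideanSpace.single i 1)
          - f x * fderiv ℝ g x (EuclideanSpace.single i 1)) • fderiv ℝ (gaussDensity n) x := by
      rw [hW]
      exact fderiv_mul hγd hin
    have h2 : fderiv ℝ (fun y => g y * fderiv ℝ f y (EuclideanSpace.single i 1)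
        - f y * fderiv ℝ g y (EuclideanSpace.single i 1)) x
        = (g x • fderiv ℝ (fun y => fderiv ℝ f y (EuclideanSpace.single i 1)) x
          + fderiv ℝ f x (EuclideanSpace.single i 1) • fderiv ℝ g x)
        - (f x • fderiv ℝ (fun y => fderiv ℝ g y (EuclideanSpace.single i 1)) x
          + fderiv ℝ g x (EuclideanSpace.single i 1) • fderiv ℝ f x) := by
      rw [fderiv_fun_sub (f := fun y => g y * fderiv ℝ f y (EuclideanSpace.single i 1))
        (g := fun y => f y * fderiv ℝ g y (EuclideanSpace.single i 1)) (hgd.mul hDfd) (hfd.mul hDgd), fderiv_fun_mul hgd hDfd, fderiv_fun_mul hfd hDgd]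
    rw [h1, h2]
    simp only [ContinuousLinearMap.add_apply, ContinuousLinearMap.smul_apply,
      ContinuousLinearMap.sub_apply, smul_eq_mul, gauss_fderiv_apply,
      EuclideanSpace.inner_single_right, starRingEnd_apply, star_trivial, one_mul]
    ring
  have hpt : ∀ x : EuclideanSpace ℝ (Fin n),
      ∑ i : Fin n, fderiv ℝ (W i) x (EuclideanSpace.single i 1)
      = gaussDensity n x *
        (g x * (lap f x - (inner ℝ x (gradient f x) : ℝ))
          - f x * (lap g x - (inner ℝ x (gradient g x) : ℝ))) := by
    intro x
    rw [Finset.sum_congr rfl fun i _ => hterm x i]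
    rw [Finset.sum_add_distrib, Finset.sum_sub_distrib, Finset.sum_sub_distrib,
      ← Finset.mul_sum, ← Finset.mul_sum, ← Finset.mul_sum, ← Finset.mul_sum,
      ← Finset.mul_sum, ← Finset.mul_sum, ← Finset.mul_sum, ← Finset.mul_sum]
    rw [lap, lap, inner_self_gradient f x, inner_self_gradient g x]
    ring_nf
  -- assemble
  have hIntOn : ∀ i : Fin n, IntegrableOn
      (fun x => fderiv ℝ (W i) x (EuclideanSpace.single i 1)) Ω := by
    intro i
    have hclos : IsCompact (closure Ω) :=
      Metric.isCompact_of_isClosed_isBounded isClosed_closure hΩb.closure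
    have hcont : Continuous (fun x => fderiv ℝ (W i) x (EuclideanSpace.single i 1)) :=
      (((hWc i).fderiv_right (m := (⊤ : ℕ∞)) (by simp)).clm_apply contDiff_const).continuous
    exact (hcont.continuousOn.integrableOn_compact hclos).mono_set subset_closure
  calc ∫ x in Ω, gaussDensity n x *
      (g x * (lap f x - (inner ℝ x (gradient f x) : ℝ))
        - f x * (lap g x - (inner ℝ x (gradient g x) : ℝ)))
      = ∫ x in Ω, ∑ i : Fin n, fderiv ℝ (W i) x (EuclideanSpace.single i 1) := by
        apply integral_congr_ae
        filter_upwards with x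
        exact (hpt x).symm
    _ = ∑ i : Fin n, ∫ x in Ω, fderiv ℝ (W i) x (EuclideanSpace.single i 1) :=
        integral_finset_sum Finset.univ (fun i _ => hIntOn i)
    _ = 0 := by
        rw [Finset.sum_congr rfl fun i _ => hWint i]
        simp

theorem pairing_backward_uniqueness (n : ℕ) (T S : ℝ) (hT : 0 < T)
    (hS : 0 < S) (hS' : S ≤ T / 2)
    (Ω : Set (EuclideanSpace ℝ (Fin n))) (hΩo : IsOpen Ω) (hΩb : Bornology.IsBounded Ω)
    (V : EuclideanSpace ℝ (Fin n) → ℝ)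
    (hV : ∀ K : Set (EuclideanSpace ℝ (Fin n)), IsCompact K → K ⊆ Ω →
      ∃ C, ∀ x ∈ K, |V x| ≤ C)
    (u : EuclideanSpace ℝ (Fin n) → ℝ → ℝ)
    (hu : ContDiff ℝ (⊤ : ℕ∞) (fun p : EuclideanSpace ℝ (Fin n) × ℝ => u p.1 p.2))
    (heq : ∀ x ∈ Ω, ∀ t : ℝ, -T < t →
      deriv (u x) t = lap (fun y => u y t) x
        - (inner ℝ x (gradient (fun y => u y t) x) : ℝ) - V x * u x t)
    (hbd : ∀ x ∈ frontier Ω, ∀ t : ℝ, -T < t → u x t = 0)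
    (hzero : ∀ x ∈ Ω, u x 0 = 0) :
    ∀ x ∈ Ω, u x (-S) = 0 := by
  classical
  set γ : EuclideanSpace ℝ (Fin n) → ℝ := gaussDensity n with hγdef
  set U : EuclideanSpace ℝ (Fin n) × ℝ → ℝ := fun p => u p.1 p.2 with hUdef
  have hγc : Continuous γ := (gauss_contDiff n).continuous
  have hUc : Continuous U := hu.continuous
  haveI hfin : IsFiniteMeasure (volume.restrict Ω) := by
    constructor
    rw [Measure.restrict_apply_univ]
    exact hΩb.measure_lt_top
  have hclos : IsCompact (closure Ω) :=
    Metric.isCompact_of_isClosed_isBounded isClosed_closure hΩb.closure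
  -- integrability helper
  have hIntOn : ∀ h : EuclideanSpace ℝ (Fin n) → ℝ, Continuous h → IntegrableOn h Ω := fun h hc =>
    (hc.continuousOn.integrableOn_compact hclos).mono_set subset_closure
  -- joint derivative in time
  set DU : EuclideanSpace ℝ (Fin n) × ℝ → ℝ := fun p => fderiv ℝ U p ((0 : EuclideanSpace ℝ (Fin n)), (1 : ℝ)) with hDUdef
  have hDUc : Continuous DU :=
    ((hu.fderiv_right (m := (⊤ : ℕ∞)) (by simp)).clm_apply contDiff_const).continuous
  have hcurve : ∀ (x : EuclideanSpace ℝ (Fin n)) (c : ℝ) (τ : ℝ),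
      HasDerivAt (fun τ : ℝ => u x (τ + c)) (DU (x, τ + c)) τ := by
    intro x c τ
    have ha : HasDerivAt (fun τ : ℝ => ((x, τ + c) : EuclideanSpace ℝ (Fin n) × ℝ)) ((0 : EuclideanSpace ℝ (Fin n)), (1 : ℝ)) τ :=
      (hasDerivAt_const τ x).prodMk ((hasDerivAt_id τ).add_const c)
    have hf := ((hu.differentiable (by simp) (x, τ + c)).hasFDerivAt).comp_hasDerivAt τ ha
    exact hf
  have hcurveneg : ∀ (x : EuclideanSpace ℝ (Fin n)) (τ : ℝ),
      HasDerivAt (fun τ : ℝ => u x (-τ)) (-(DU (x, -τ))) τ := by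
    intro x τ
    have ha : HasDerivAt (fun τ : ℝ => ((x, -τ) : EuclideanSpace ℝ (Fin n) × ℝ)) ((0 : EuclideanSpace ℝ (Fin n)), (-1 : ℝ)) τ :=
      (hasDerivAt_const τ x).prodMk (hasDerivAt_id τ).neg
    have hf := ((hu.differentiable (by simp) (x, -τ)).hasFDerivAt).comp_hasDerivAt τ ha
    have : fderiv ℝ U (x, -τ) ((0 : EuclideanSpace ℝ (Fin n)), (-1 : ℝ)) = -(DU (x, -τ)) := by
      have hneg : ((0 : EuclideanSpace ℝ (Fin n)), (-1 : ℝ)) = -(((0 : EuclideanSpace ℝ (Fin n)), (1 : ℝ)) : EuclideanSpace ℝ (Fin n) × ℝ) := by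
        simp [Prod.ext_iff]
      rw [hneg, map_neg, hDUdef]
    rwa [this] at hf
  -- deriv (u x) t in terms of DU
  have hderiv_eq : ∀ (x : EuclideanSpace ℝ (Fin n)) (t : ℝ), deriv (u x) t = DU (x, t) := by
    intro x t
    have h := hcurve x 0 t
    simp only [add_zero] at h
    have h2 : HasDerivAt (u x) (DU (x, t)) t := by
      convert h using 2 <;> simp
    exact h2.deriv
  -- the pairing function and its derivative
  set G : ℝ → EuclideanSpace ℝ (Fin n) → ℝ := fun τ x => u x (τ - 2*S) * u x (-τ) * γ x with hGdef
  set G' : ℝ → EuclideanSpace ℝ (Fin n) → ℝ := fun τ x =>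
    (DU (x, τ - 2*S) * u x (-τ) - u x (τ - 2*S) * DU (x, -τ)) * γ x with hG'def
  have hGc : ∀ τ, Continuous (G τ) := by
    intro τ
    apply Continuous.mul _ hγc
    exact (hUc.comp (continuous_id.prodMk continuous_const)).mul
      (hUc.comp (continuous_id.prodMk continuous_const))
  have hG'c : ∀ τ, Continuous (G' τ) := by
    intro τ
    apply Continuous.mul _ hγc
    apply Continuous.sub
    · exact (hDUc.comp (continuous_id.prodMk continuous_const)).mul
        (hUc.comp (continuous_id.prodMk continuous_const))
    · exact (hUc.comp (continuous_id.prodMk continuous_const)).mul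
        (hDUc.comp (continuous_id.prodMk continuous_const))
  have hG'jc : Continuous (fun p : EuclideanSpace ℝ (Fin n) × ℝ => G' p.2 p.1) := by
    apply Continuous.mul _ (hγc.comp continuous_fst)
    apply Continuous.sub
    · exact (hDUc.comp ((continuous_fst).prodMk (continuous_snd.sub continuous_const))).mul
        (hUc.comp ((continuous_fst).prodMk continuous_snd.neg))
    · exact (hUc.comp ((continuous_fst).prodMk (continuous_snd.sub continuous_const))).mul
        (hDUc.comp ((continuous_fst).prodMk continuous_snd.neg))
  set D : ℝ → ℝ := fun τ => ∫ x in Ω, G τ x with hDdef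
  -- derivative of D everywhere
  have hD : ∀ τ₀ : ℝ, HasDerivAt D (∫ x in Ω, G' τ₀ x) τ₀ := by
    intro τ₀
    -- bound on compact set
    obtain ⟨C, hC⟩ := (hclos.prod (isCompact_Icc (a := τ₀ - 1) (b := τ₀ + 1)))
      |>.exists_bound_of_continuousOn hG'jc.continuousOn
    have hdiff : ∀ (x : EuclideanSpace ℝ (Fin n)), ∀ τ ∈ Metric.ball τ₀ 1,
        HasDerivAt (fun τ => G τ x) (G' τ x) τ := by
      intro x τ hτ
      have h1 : HasDerivAt (fun τ : ℝ => u x (τ - 2*S)) (DU (x, τ - 2*S)) τ := by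
        have := hcurve x (-(2*S)) τ
        simpa [sub_eq_add_neg] using this
      have h2 := hcurveneg x τ
      have h3 := (h1.mul h2).mul_const (γ x)
      refine h3.congr_deriv ?_
      rw [hG'def]
      ring
    refine (hasDerivAt_integral_of_dominated_loc_of_deriv_le (Metric.ball_mem_nhds τ₀ one_pos)
      (Filter.Eventually.of_forall fun τ => ((hGc τ).aestronglyMeasurable))
      (hIntOn (G τ₀) (hGc τ₀))
      ((hG'c τ₀).aestronglyMeasurable)
      ?_ (integrable_const C)
      (Filter.Eventually.of_forall fun x τ hτ => hdiff x τ hτ)).2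
    refine (ae_restrict_iff' hΩo.measurableSet).2 (Filter.Eventually.of_forall ?_)
    intro x hx τ hτ
    have hmem : (x, τ) ∈ (closure Ω) ×ˢ Set.Icc (τ₀ - 1) (τ₀ + 1) := by
      constructor
      · exact subset_closure hx
      · have := Metric.mem_ball.1 hτ
        rw [Real.dist_eq] at this
        have h := abs_le.1 this.le
        exact ⟨by linarith [h.1], by linarith [h.2]⟩
    exact hC (x, τ) hmem
  have hDcont : Continuous D :=
    continuous_iff_continuousAt.2 fun τ => (hD τ).continuousAt
  -- slices are smooth and vanish on the boundary
  have hslice : ∀ s : ℝ, ContDiff ℝ (⊤ : ℕ∞) (fun y => u y s) :=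
    fun s => hu.comp (contDiff_id.prodMk contDiff_const)
  -- the derivative vanishes
  have hD0 : ∀ τ₀ : ℝ, -T < τ₀ - 2*S → -T < -τ₀ → (∫ x in Ω, G' τ₀ x) = 0 := by
    intro τ₀ h1 h2
    have hcongr : ∫ x in Ω, G' τ₀ x = ∫ x in Ω, γ x *
        ((fun y => u y (-τ₀)) x * (lap (fun y => u y (τ₀ - 2*S)) x
          - (inner ℝ x (gradient (fun y => u y (τ₀ - 2*S)) x) : ℝ))
        - (fun y => u y (τ₀ - 2*S)) x * (lap (fun y => u y (-τ₀)) x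
          - (inner ℝ x (gradient (fun y => u y (-τ₀)) x) : ℝ))) := by
      apply setIntegral_congr_fun hΩo.measurableSet
      intro x hx
      simp only
      rw [hG'def]
      simp only
      rw [← hderiv_eq x (τ₀ - 2*S), ← hderiv_eq x (-τ₀),
        heq x hx (τ₀ - 2*S) h1, heq x hx (-τ₀) h2]
      ring
    rw [hcongr]
    exact pairing_symm Ω hΩo hΩb _ _ (hslice (τ₀ - 2*S)) (hslice (-τ₀))
      (fun x hx => hbd x hx _ h1) (fun x hx => hbd x hx _ h2)
  -- D is constant on (0, S]
  have hconst : ∀ τ ∈ Set.Ioc (0:ℝ) S, D τ = D S := by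
    intro τ hτ
    have key := constant_of_has_deriv_right_zero (f := D) (a := τ) (b := S)
      (hDcont.continuousOn) ?_
    · exact (key S ⟨hτ.2, le_refl S⟩).symm
    · intro σ hσ
      have hσ1 : -T < σ - 2*S := by
        have : (0:ℝ) < σ := lt_of_lt_of_le hτ.1 hσ.1
        nlinarith
      have hσ2 : -T < -σ := by
        have : σ ≤ S := hσ.2.le
        nlinarith
      have := hD σ
      rw [hD0 σ hσ1 hσ2] at this
      exact this.hasDerivWithinAt
  -- D 0 = 0
  have hDzero : D 0 = 0 := by
    rw [hDdef]
    simp only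
    have : ∫ x in Ω, G 0 x = ∫ x in Ω, (0:ℝ) := by
      apply setIntegral_congr_fun hΩo.measurableSet
      intro x hx
      rw [hGdef]
      simp only
      rw [show -(0:ℝ) = 0 by ring, hzero x hx]
      ring
    rw [this, integral_zero]
  -- D S = 0 by continuity
  have hDS : D S = 0 := by
    have htend : Filter.Tendsto D (nhdsWithin 0 (Set.Ioi 0)) (nhds (D 0)) :=
      (hDcont.continuousAt).continuousWithinAt.tendsto
    have hev : D =ᶠ[nhdsWithin 0 (Set.Ioi 0)] fun _ => D S := by
      have hmem : Set.Ioc (0:ℝ) S ∈ nhdsWithin 0 (Set.Ioi 0) := by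
        apply mem_nhdsWithin.2
        exact ⟨Set.Iio S, isOpen_Iio, hS, by
          intro y hy
          exact ⟨hy.2, le_of_lt hy.1⟩⟩
      filter_upwards [hmem] with τ hτ
      exact hconst τ hτ
    have htend2 : Filter.Tendsto D (nhdsWithin 0 (Set.Ioi 0)) (nhds (D S)) := by
      rw [Filter.tendsto_congr' hev]
      exact tendsto_const_nhds
    haveI : (nhdsWithin (0:ℝ) (Set.Ioi 0)).NeBot := nhdsGT_neBot 0
    have := tendsto_nhds_unique htend htend2
    rw [hDzero] at this
    exact this.symm
  -- D S is the integral of a nonnegative function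
  have hDSform : D S = ∫ x in Ω, (u x (-S))^2 * γ x := by
    rw [hDdef]
    simp only
    apply setIntegral_congr_fun hΩo.measurableSet
    intro x hx
    rw [hGdef]
    simp only
    rw [show S - 2*S = -S by ring]
    ring
  have hae : (fun x => (u x (-S))^2 * γ x) =ᵐ[volume.restrict Ω] 0 := by
    apply (integral_eq_zero_iff_of_nonneg_ae ?_ ?_).1
    · rw [← hDSform]; exact hDS
    · apply Filter.Eventually.of_forall
      intro x
      have := gauss_pos n x
      positivity
    · apply hIntOn
      exact ((hUc.comp (continuous_id.prodMk continuous_const)).pow 2).mul hγc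
  -- conclude pointwise
  intro x₀ hx₀
  by_contra hne
  have hpos : 0 < (u x₀ (-S))^2 * γ x₀ := by
    have h1 : 0 < (u x₀ (-S))^2 := by positivity
    exact mul_pos h1 (gauss_pos n x₀)
  set h : EuclideanSpace ℝ (Fin n) → ℝ := fun x => (u x (-S))^2 * γ x with hhdef
  have hhc : Continuous h :=
    ((hUc.comp (continuous_id.prodMk continuous_const)).pow 2).mul hγc
  have hUopen : IsOpen (Ω ∩ {x | 0 < h x}) :=
    hΩo.inter (isOpen_lt continuous_const hhc)
  have hUx₀ : x₀ ∈ Ω ∩ {x | 0 < h x} := ⟨hx₀, hpos⟩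
  have hposvol : 0 < volume (Ω ∩ {x | 0 < h x}) :=
    hUopen.measure_pos volume ⟨x₀, hUx₀⟩
  have hsub : (Ω ∩ {x | 0 < h x}) ⊆ {x | h x ≠ 0} ∩ Ω := by
    intro x hx
    exact ⟨ne_of_gt hx.2, hx.1⟩
  have hzm : volume.restrict Ω {x | h x ≠ 0} = 0 := by
    have := hae
    rw [Filter.EventuallyEq, ae_iff] at this
    simpa using this
  rw [Measure.restrict_apply' hΩo.measurableSet] at hzm
  have : volume (Ω ∩ {x | 0 < h x}) = 0 :=
    le_antisymm (le_trans (measure_mono hsub) (le_of_eq hzm)) zero_le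
  rw [this] at hposvol
  exact lt_irrefl _ hposvol
end

section
/- ODE comparison for the potential: if v : (0,∞) → ℝ is C¹ and satisfies |r v′(r) + 2 v(r)| ≤ 1 + r² for all r > 0, then there exists a constant c₀ > 0 such that |v(r)| ≤ r²/4 + 1/2 + c₀/r² for all r > 0. -/
open Real

/-! The function `r²v(r)` has derivative `r (r v' + 2 v)`, which the hypothesis bounds in absolute
value by `r (1 + r²)`, the derivative of `G(r) = r²/2 + r⁴/4`. Comparing with `r = 1` gives
`r² |v r| ≤ |v 1| + |G r - G 1| ≤ r⁴/4 + r²/2 + |v 1| + 3/4`; divide by `r²`. -/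

/-- A derivative bound `|F'| ≤ G'` makes both `G - F` and `G + F` monotone. -/
theorem abs_sub_le_abs_sub_of_abs_deriv_le {F G F' G' : ℝ → ℝ} {s : Set ℝ} (hs : Convex ℝ s)
    (hF : ∀ x ∈ s, HasDerivAt F (F' x) x) (hG : ∀ x ∈ s, HasDerivAt G (G' x) x)
    (hFG : ∀ x ∈ s, |F' x| ≤ G' x) {a b : ℝ} (ha : a ∈ s) (hb : b ∈ s) :
    |F b - F a| ≤ |G b - G a| := by
  have hmono : ∀ σ : ℝ, |σ| ≤ 1 → MonotoneOn (fun x => G x + σ * F x) s := by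
    intro σ hσ
    have hderiv : ∀ x ∈ s, HasDerivAt (fun x => G x + σ * F x) (G' x + σ * F' x) x :=
      fun x hx => (hG x hx).add ((hF x hx).const_mul σ)
    refine monotoneOn_of_hasDerivWithinAt_nonneg hs
      (fun x hx => (hderiv x hx).continuousAt.continuousWithinAt)
      (fun x hx => (hderiv x (interior_subset hx)).hasDerivWithinAt) fun x hx => ?_
    have hx := interior_subset hx
    have : |σ * F' x| ≤ G' x := by
      rw [abs_mul]
      exact (mul_le_of_le_one_left (abs_nonneg _) hσ).trans (hFG x hx)
    linarith [neg_abs_le (σ * F' x)]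
  wlog hab : a ≤ b generalizing a b
  · rw [abs_sub_comm, abs_sub_comm (G b)]
    exact this hb ha (le_of_not_ge hab)
  have hplus := hmono 1 (by norm_num) ha hb hab
  have hminus := hmono (-1) (by norm_num) ha hb hab
  simp only [one_mul, neg_one_mul] at hplus hminus
  rw [abs_of_nonneg (by linarith : 0 ≤ G b - G a), abs_le]
  constructor <;> linarith

theorem ode_comparison_potential (v : ℝ → ℝ)
    (hv : ∀ r : ℝ, 0 < r → DifferentiableAt ℝ v r)
    (hineq : ∀ r : ℝ, 0 < r → |r * deriv v r + 2 * v r| ≤ 1 + r ^ 2) :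
    ∃ c₀ > 0, ∀ r : ℝ, 0 < r → |v r| ≤ r ^ 2 / 4 + 1 / 2 + c₀ / r ^ 2 := by
  set G : ℝ → ℝ := fun s => s ^ 2 / 2 + s ^ 4 / 4
  have hF : ∀ r ∈ Set.Ioi (0 : ℝ),
      HasDerivAt (fun s => s ^ 2 * v s) (r * (r * deriv v r + 2 * v r)) r := fun r hr =>
    ((hasDerivAt_pow 2 r).mul (hv r hr).hasDerivAt).congr_deriv (by ring)
  have hG : ∀ r ∈ Set.Ioi (0 : ℝ), HasDerivAt G (r * (1 + r ^ 2)) r := fun r _ =>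
    (((hasDerivAt_pow 2 r).div_const 2).add ((hasDerivAt_pow 4 r).div_const 4)).congr_deriv
      (by ring)
  have hFG : ∀ r ∈ Set.Ioi (0 : ℝ), |r * (r * deriv v r + 2 * v r)| ≤ r * (1 + r ^ 2) :=
    fun r (hr : 0 < r) => by
      rw [abs_mul, abs_of_pos hr]
      exact mul_le_mul_of_nonneg_left (hineq r hr) hr.le
  refine ⟨|v 1| + 3 / 4, by positivity, fun r hr => ?_⟩
  have hcomp := abs_sub_le_abs_sub_of_abs_deriv_le (convex_Ioi 0) hF hG hFG
    (Set.mem_Ioi.mpr one_pos) (Set.mem_Ioi.mpr hr)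
  have hr2 : 0 < r ^ 2 := by positivity
  have hbound : r ^ 2 * |v r| ≤ r ^ 4 / 4 + r ^ 2 / 2 + (|v 1| + 3 / 4) :=
    calc r ^ 2 * |v r| = |r ^ 2 * v r| := by rw [abs_mul, abs_of_pos hr2]
      _ ≤ |r ^ 2 * v r - 1 ^ 2 * v 1| + |v 1| := by
        rw [one_pow, one_mul]; linarith [abs_sub_abs_le_abs_sub (r ^ 2 * v r) (v 1)]
      _ ≤ |G r - G 1| + |v 1| := by gcongr
      _ ≤ |G r| + |G 1| + |v 1| := by gcongr; exact abs_sub _ _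
      _ = r ^ 4 / 4 + r ^ 2 / 2 + (|v 1| + 3 / 4) := by
        rw [abs_of_nonneg (by positivity), abs_of_nonneg (by norm_num)]; norm_num [G]; ring
  rw [show r ^ 2 / 4 + 1 / 2 + (|v 1| + 3 / 4) / r ^ 2
      = (r ^ 4 / 4 + r ^ 2 / 2 + (|v 1| + 3 / 4)) / r ^ 2 by field_simp,
    le_div_iff₀ hr2, mul_comm]
  exact hbound
end
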